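/- The function f(ς, ε) = (1 + ς)² e^{−ε(1+ς)} satisfies the collision-induced breakage equation ∂f/∂ς(ς,ε) = ∫₀^∞ ∫_ε^∞ (ρσ)(2/ρ) f(ς,ρ) f(ς,σ) dρ dσ − ∫₀^∞ (ερ) f(ς,ε) f(ς,ρ) dρ for all ς ≥ 0 and ε > 0, with initial condition f(0, ε) = e^{−ε}. -/

import Mathlib

open MeasureTheory Set Real

lemma lemA {a : ℝ} (ha : 0 < a) (ε : ℝ) :
    ∫ ρ in Ioi ε, Real.exp (-(a * ρ)) = Real.exp (-(a * ε)) / a := by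
  have h := MeasureTheory.integral_comp_mul_left_Ioi (fun x => Real.exp (-x)) ε ha
  simp only [smul_eq_mul, integral_exp_neg_Ioi] at h
  rw [h]
  field_simp

lemma lemB {a : ℝ} (ha : 0 < a) :
    ∫ t in Ioi (0:ℝ), t * Real.exp (-(a * t)) = 1 / a ^ 2 := by
  have h := Real.integral_rpow_mul_exp_neg_mul_Ioi (a := 2) (r := a) two_pos ha
  simp only [show (2:ℝ) - 1 = 1 by norm_num, Real.rpow_one, Real.Gamma_two, mul_one] at h
  rw [h, Real.rpow_two]
  field_simp

theorem stmt_6 (f : ℝ → ℝ → ℝ)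
    (hf : ∀ ς ε : ℝ, f ς ε = (1 + ς) ^ 2 * Real.exp (-ε * (1 + ς))) :
    (∀ ε : ℝ, 0 < ε → f 0 ε = Real.exp (-ε)) ∧
      ∀ ς : ℝ, 0 ≤ ς → ∀ ε : ℝ, 0 < ε →
        HasDerivAt (fun s => f s ε)
          ((∫ σ in Set.Ioi (0:ℝ), ∫ ρ in Set.Ioi ε, (ρ * σ) * (2 / ρ) * f ς ρ * f ς σ)
            - ∫ ρ in Set.Ioi (0:ℝ), (ε * ρ) * f ς ε * f ς ρ) ς := by
  constructor
  · intro ε _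
    rw [hf]; norm_num
  intro ς hς ε hε
  set a : ℝ := 1 + ς with ha_def
  have ha : 0 < a := by positivity
  -- inner integral
  have hinner : ∀ σ : ℝ, (∫ ρ in Set.Ioi ε, (ρ * σ) * (2 / ρ) * f ς ρ * f ς σ)
      = (2 * σ * f ς σ * a ^ 2) * (Real.exp (-(a * ε)) / a) := by
    intro σ
    have hcong : ∀ ρ ∈ Set.Ioi ε, (ρ * σ) * (2 / ρ) * f ς ρ * f ς σ
        = (2 * σ * f ς σ * a ^ 2) * Real.exp (-(a * ρ)) := by
      intro ρ hρ
      have hρ0 : ρ ≠ 0 := ne_of_gt (lt_trans hε hρ)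
      rw [hf ς ρ, show -ρ * (1 + ς) = -(a * ρ) by rw [ha_def]; ring]
      field_simp
      ring
    rw [MeasureTheory.setIntegral_congr_fun measurableSet_Ioi hcong,
      MeasureTheory.integral_const_mul, lemA ha ε]
  have houter : (∫ σ in Set.Ioi (0:ℝ), ∫ ρ in Set.Ioi ε, (ρ * σ) * (2 / ρ) * f ς ρ * f ς σ)
      = 2 * a * Real.exp (-(a * ε)) := by
    have hcong : ∀ σ ∈ Set.Ioi (0:ℝ), (∫ ρ in Set.Ioi ε, (ρ * σ) * (2 / ρ) * f ς ρ * f ς σ)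
        = (2 * a ^ 3 * Real.exp (-(a * ε))) * (σ * Real.exp (-(a * σ))) := by
      intro σ _
      rw [hinner σ, hf ς σ, show -σ * (1 + ς) = -(a * σ) by rw [ha_def]; ring]
      field_simp
      ring
    rw [MeasureTheory.setIntegral_congr_fun measurableSet_Ioi hcong,
      MeasureTheory.integral_const_mul, lemB ha]
    field_simp
  have hsecond : (∫ ρ in Set.Ioi (0:ℝ), (ε * ρ) * f ς ε * f ς ρ)
      = ε * a ^ 2 * Real.exp (-(a * ε)) := by
    have hcong : ∀ ρ ∈ Set.Ioi (0:ℝ), (ε * ρ) * f ς ε * f ς ρ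
        = (ε * f ς ε * a ^ 2) * (ρ * Real.exp (-(a * ρ))) := by
      intro ρ _
      rw [hf ς ρ, show -ρ * (1 + ς) = -(a * ρ) by rw [ha_def]; ring]
      ring
    rw [MeasureTheory.setIntegral_congr_fun measurableSet_Ioi hcong,
      MeasureTheory.integral_const_mul, lemB ha, hf ς ε,
      show -ε * (1 + ς) = -(a * ε) by rw [ha_def]; ring]
    field_simp
    ring
  rw [houter, hsecond]
  have hfun : (fun s => f s ε) = fun s => (1 + s) ^ 2 * Real.exp (-ε * (1 + s)) :=
    funext fun s => hf s ε
  rw [hfun]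
  have h1 : HasDerivAt (fun s : ℝ => 1 + s) 1 ς := by
    simpa using (hasDerivAt_id ς).const_add 1
  have h2 := h1.pow 2
  have h3 : HasDerivAt (fun s : ℝ => -ε * (1 + s)) (-ε) ς := by
    simpa using h1.const_mul (-ε)
  have h4 := h3.exp
  have h5 := h2.mul h4
  refine h5.congr_deriv ?_
  rw [show -(a * ε) = -ε * (1 + ς) by rw [ha_def]; ring, ha_def]
  simp only [Pi.pow_apply]
  ring
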